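/- Correctness of the closest-vector algorithm on the unit cube (Algorithm 1 candidate restriction). Let d > 0, n ≥ 1, and let b₁, …, bₙ be vectors in a real inner product space with ‖b_i‖ = d for all i and ⟨b_i, b_j⟩ = d²/2 for all i ≠ j. Let x̄ ∈ ℝⁿ with 0 ≤ x̄_i < 1 for all i, and let σ be a permutation of {1, …, n} sorting the coordinates in ascending order, i.e. x̄_{σ(1)} ≤ x̄_{σ(2)} ≤ … ≤ x̄_{σ(n)}. For k ∈ {1, …, n+1} define the candidate y^{(k)} ∈ {0,1}ⁿ by y^{(k)}_{σ(i)} = 0 for i < k and y^{(k)}_{σ(i)} = 1 for i ≥ k (so y^{(1)} is the all-ones vector and y^{(n+1)} is the zero vector). Then there exists k ∈ {1, …, n+1} such that ‖Σ_{i=1}^n (x̄_i − y^{(k)}_i) b_i‖ ≤ ‖Σ_{i=1}^n (x̄_i − z_i) b_i‖ for every z ∈ ℤⁿ; i.e. the minimum over the full lattice ℤⁿ is attained at one of the n+1 candidates. -/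

import Mathlib

open Finset


lemma tail_card (n t : ℕ) (ht : t ≤ n) :
    (filter (fun i : Fin n => t ≤ (i:ℕ)) univ).card = n - t := by
  rcases eq_or_lt_of_le ht with h | h
  · subst h
    rw [Nat.sub_self, card_eq_zero, filter_eq_empty_iff]
    intro i _
    simp [i.isLt]
  · have : (filter (fun i : Fin n => t ≤ (i:ℕ)) univ) = Finset.Ici (⟨t, h⟩ : Fin n) := by
      ext i
      simp [Fin.le_def]
    rw [this, Fin.card_Ici]

lemma habs_int (e : ℤ) : |e| ≤ e^2 := by
  rcases eq_or_ne e 0 with rfl | h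
  · simp
  · have h1 : 1 ≤ |e| := Int.one_le_abs h
    nlinarith [sq_abs e, abs_nonneg e]

lemma rearrange (n : ℕ) (f : Fin n → ℝ)
    (hanti : ∀ i j : Fin n, i ≤ j → f j ≤ f i) (A : Finset (Fin n)) :
    ∑ i ∈ filter (fun i : Fin n => n - A.card ≤ (i:ℕ)) univ, f i ≤ ∑ i ∈ A, f i := by
  set a := A.card with ha
  set B := filter (fun i : Fin n => n - a ≤ (i:ℕ)) univ with hB
  have han : a ≤ n := by
    have := card_le_card (subset_univ A)
    simpa using this
  have hBcard : B.card = a := by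
    rw [hB, tail_card n (n-a) (Nat.sub_le _ _)]
    omega
  have hsplitB : ∑ i ∈ B ∩ A, f i + ∑ i ∈ B \ A, f i = ∑ i ∈ B, f i :=
    sum_inter_add_sum_sdiff B A f
  have hsplitA : ∑ i ∈ A ∩ B, f i + ∑ i ∈ A \ B, f i = ∑ i ∈ A, f i :=
    sum_inter_add_sum_sdiff A B f
  have hcards : (B \ A).card = (A \ B).card := by
    have h1 := card_inter_add_card_sdiff B A
    have h2 := card_inter_add_card_sdiff A B
    rw [inter_comm] at h1
    omega
  have hkey : ∀ v ∈ B \ A, ∀ u ∈ A \ B, f v ≤ f u := by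
    intro v hv u hu
    have hvB : (n - a : ℕ) ≤ (v:ℕ) := by
      have := (mem_sdiff.mp hv).1
      simpa [hB] using this
    have huB : ¬ ((n - a : ℕ) ≤ (u:ℕ)) := by
      have := (mem_sdiff.mp hu).2
      simpa [hB] using this
    exact hanti u v (by omega)
  have hmain : ∑ i ∈ B \ A, f i ≤ ∑ i ∈ A \ B, f i := by
    rcases (A \ B).eq_empty_or_nonempty with he | hne
    · have : (B \ A) = ∅ := by
        rw [← card_eq_zero]
        rw [hcards, he]
        simp
      rw [this, he]
    · obtain ⟨u₀, hu₀, hc⟩ := Finset.exists_mem_eq_inf' hne f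
      calc ∑ i ∈ B \ A, f i ≤ (B \ A).card • ((A \ B).inf' hne f) := by
            apply Finset.sum_le_card_nsmul
            intro v hv
            rw [hc]
            exact hkey v hv u₀ hu₀
        _ = (A \ B).card • ((A \ B).inf' hne f) := by rw [hcards]
        _ ≤ ∑ i ∈ A \ B, f i := by
            apply Finset.card_nsmul_le_sum
            intro u hu
            exact Finset.inf'_le f hu
  calc ∑ i ∈ B, f i = ∑ i ∈ B ∩ A, f i + ∑ i ∈ B \ A, f i := hsplitB.symm
    _ ≤ ∑ i ∈ A ∩ B, f i + ∑ i ∈ A \ B, f i := by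
        rw [inter_comm]
        exact add_le_add_right hmain _
    _ = ∑ i ∈ A, f i := hsplitA

lemma tailshift (n m a : ℕ) (hm : m ≤ n) (ha : a ≤ n) (f : Fin n → ℝ)
    (h1 : ∀ i, f i ≤ 1) (h2 : ∀ i, -1 ≤ f i) :
    ∑ i ∈ filter (fun i : Fin n => n - m ≤ (i:ℕ)) univ, f i ≤
    ∑ i ∈ filter (fun i : Fin n => n - a ≤ (i:ℕ)) univ, f i + |(m:ℝ) - a| := by
  set Sm := filter (fun i : Fin n => n - m ≤ (i:ℕ)) univ with hSm
  set Sa := filter (fun i : Fin n => n - a ≤ (i:ℕ)) univ with hSa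
  have hSmc : Sm.card = m := by rw [hSm, tail_card n (n-m) (Nat.sub_le _ _)]; omega
  have hSac : Sa.card = a := by rw [hSa, tail_card n (n-a) (Nat.sub_le _ _)]; omega
  rcases le_total a m with hle | hle
  · have hsub : Sa ⊆ Sm := by
      intro i hi
      simp only [hSm, hSa, mem_filter, mem_univ, true_and] at *
      omega
    have hd : ∑ i ∈ Sm \ Sa, f i = ∑ i ∈ Sm, f i - ∑ i ∈ Sa, f i :=
      sum_sdiff_eq_sub hsub
    have hc : (Sm \ Sa).card = m - a := by rw [card_sdiff_of_subset hsub, hSmc, hSac]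
    have hb : ∑ i ∈ Sm \ Sa, f i ≤ (Sm \ Sa).card • (1:ℝ) :=
      Finset.sum_le_card_nsmul _ _ _ (fun i _ => h1 i)
    rw [hc] at hb
    simp only [nsmul_eq_mul, mul_one] at hb
    have habs : ((m - a : ℕ) : ℝ) ≤ |(m:ℝ) - a| := by
      rw [le_abs]
      left
      rw [Nat.cast_sub hle]
    linarith
  · have hsub : Sm ⊆ Sa := by
      intro i hi
      simp only [hSm, hSa, mem_filter, mem_univ, true_and] at *
      omega
    have hd : ∑ i ∈ Sa \ Sm, f i = ∑ i ∈ Sa, f i - ∑ i ∈ Sm, f i :=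
      sum_sdiff_eq_sub hsub
    have hc : (Sa \ Sm).card = a - m := by rw [card_sdiff_of_subset hsub, hSac, hSmc]
    have hb : (Sa \ Sm).card • (-1:ℝ) ≤ ∑ i ∈ Sa \ Sm, f i :=
      Finset.card_nsmul_le_sum _ _ _ (fun i _ => h2 i)
    rw [hc] at hb
    simp only [nsmul_eq_mul, mul_neg, mul_one] at hb
    have habs : ((a - m : ℕ) : ℝ) ≤ |(m:ℝ) - a| := by
      rw [le_abs]
      right
      rw [Nat.cast_sub hle]
      ring_nf
      linarith

    linarith


lemma normsq {V : Type*} [NormedAddCommGroup V] [InnerProductSpace ℝ V]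
    {n : ℕ} {d : ℝ} (b : Fin n → V)
    (hnorm : ∀ i, ‖b i‖ = d)
    (hinner : ∀ i j, i ≠ j → (inner ℝ (b i) (b j) : ℝ) = d ^ 2 / 2)
    (c : Fin n → ℝ) :
    ‖∑ i, c i • b i‖^2 = d^2/2 * ((∑ i, c i)^2 + ∑ i, (c i)^2) := by
  have hbb : ∀ i j : Fin n, (inner ℝ (b i) (b j) : ℝ) = d^2/2 + (if j = i then d^2/2 else 0) := by
    intro i j
    by_cases h : i = j
    · subst h
      rw [real_inner_self_eq_norm_sq, hnorm]
      simp
    · rw [hinner i j h, if_neg (Ne.symm h)]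
      ring
  calc ‖∑ i, c i • b i‖^2 = (inner ℝ (∑ i, c i • b i) (∑ i, c i • b i) : ℝ) :=
        (real_inner_self_eq_norm_sq _).symm
    _ = ∑ i, ∑ j, c i * (c j * (inner ℝ (b i) (b j) : ℝ)) := by
        rw [sum_inner]
        apply sum_congr rfl
        intro i _
        rw [inner_sum]
        apply sum_congr rfl
        intro j _
        rw [real_inner_smul_left, real_inner_smul_right]
    _ = ∑ i, ∑ j, (c i * c j * (d^2/2) + (if j = i then c i * c j * (d^2/2) else 0)) := by
        apply sum_congr rfl; intro i _
        apply sum_congr rfl; intro j _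
        rw [hbb]
        by_cases h : j = i <;> simp [h] <;> ring
    _ = (∑ i, (∑ j, c i * c j * (d^2/2))) + ∑ i, c i * c i * (d^2/2) := by
        have hrow : ∀ i : Fin n, ∑ j, (c i * c j * (d^2/2) + (if j = i then c i * c j * (d^2/2) else 0))
            = (∑ j, c i * c j * (d^2/2)) + c i * c i * (d^2/2) := by
          intro i
          rw [sum_add_distrib]
          congr 1
          rw [sum_ite_eq' univ i (fun j => c i * c j * (d^2/2))]
          simp
        rw [sum_congr rfl (fun i _ => hrow i), sum_add_distrib]
    _ = d^2/2 * ((∑ i, c i)^2 + ∑ i, (c i)^2) := by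
        have h1 : ∀ i : Fin n, ∑ j, c i * c j * (d^2/2) = c i * ((∑ j, c j) * (d^2/2)) := by
          intro i
          rw [← sum_mul, ← mul_sum]
          ring
        rw [sum_congr rfl (fun i _ => h1 i), ← sum_mul]
        have h2 : ∑ i, c i * c i * (d^2/2) = (∑ i, (c i)^2) * (d^2/2) := by
          rw [← sum_mul]
          apply congrArg (· * (d^2/2))
          apply sum_congr rfl
          intro i _
          ring
        rw [h2]
        ring

lemma core (n : ℕ) (x : Fin n → ℝ) (hx0 : ∀ i, 0 ≤ x i) (hx1 : ∀ i, x i < 1)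
    (hmono : ∀ i j : Fin n, i ≤ j → x i ≤ x j) (w : Fin n → ℤ) :
    ∃ k : ℕ, k ≤ n ∧
      (∑ i, (x i - (if (i:ℕ) < k then 0 else 1)))^2
        + ∑ i, (x i - (if (i:ℕ) < k then 0 else 1))^2
      ≤ (∑ i, (x i - (w i : ℝ)))^2 + ∑ i, (x i - (w i : ℝ))^2 := by
  classical
  set A := filter (fun i : Fin n => 1 ≤ w i) univ with hA_def
  set a := A.card with ha_def
  set T := ∑ i, w i with hT_def
  set m := min T.toNat n with hm_def
  have hmn : m ≤ n := min_le_right _ _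
  have han : a ≤ n := by
    have := card_le_card (subset_univ A)
    simpa using this
  refine ⟨n - m, Nat.sub_le n m, ?_⟩
  set X := ∑ i, x i with hX_def
  have hX0 : 0 ≤ X := sum_nonneg fun i _ => hx0 i
  have hXn : X ≤ n := by
    calc X ≤ ∑ _i : Fin n, (1:ℝ) := sum_le_sum (fun i _ => (hx1 i).le)
      _ = n := by simp
  -- candidate linear sum
  have hcand_sum : ∑ i, (x i - (if (i:ℕ) < n - m then 0 else 1)) = X - m := by
    rw [sum_sub_distrib]
    have h1 : ∑ i : Fin n, (if (i:ℕ) < n - m then (0:ℝ) else 1)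
        = ∑ i ∈ filter (fun i : Fin n => n - m ≤ (i:ℕ)) univ, (1:ℝ) := by
      rw [sum_filter]
      apply sum_congr rfl
      intro i _
      by_cases h : (n - m : ℕ) ≤ (i:ℕ)
      · rw [if_pos h, if_neg (not_lt.mpr h)]
      · rw [if_neg h, if_pos (not_le.mp h)]
    rw [h1, sum_const, tail_card n (n-m) (Nat.sub_le _ _)]
    have : (n - (n - m) : ℕ) = m := by omega
    rw [this]
    simp [hX_def]
  -- candidate square sum
  have hcand_sq : ∑ i, (x i - (if (i:ℕ) < n - m then 0 else 1))^2
      = (∑ i, (x i)^2) + ∑ i ∈ filter (fun i : Fin n => n - m ≤ (i:ℕ)) univ, (1 - 2 * x i) := by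
    rw [sum_filter, ← sum_add_distrib]
    apply sum_congr rfl
    intro i _
    by_cases h : (n - m : ℕ) ≤ (i:ℕ)
    · rw [if_pos h, if_neg (not_lt.mpr h)]
      ring
    · rw [if_neg h, if_pos (not_le.mp h)]
      ring
  -- z linear sum
  have hz_sum : ∑ i, (x i - (w i : ℝ)) = X - (T:ℝ) := by
    rw [sum_sub_distrib]
    congr 1
    rw [hT_def]
    push_cast
    rfl
  -- per-coordinate lower bound
  have hper : ∀ i, (x i)^2 + (if 1 ≤ w i then 1 - 2*x i else 0)
      + ((w i : ℝ) - (if 1 ≤ w i then 1 else 0))^2 ≤ (x i - (w i : ℝ))^2 := by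
    intro i
    by_cases h : 1 ≤ w i
    · rw [if_pos h, if_pos h]
      have hw : (1:ℝ) ≤ (w i : ℝ) := by exact_mod_cast h
      nlinarith [hx1 i, hw]
    · rw [if_neg h, if_neg h]
      have hw : ((w i : ℝ)) ≤ 0 := by exact_mod_cast (by omega : w i ≤ 0)
      nlinarith [hx0 i, hw]
  -- C2
  have hC2 : |(T:ℝ) - (a:ℝ)| ≤ ∑ i, ((w i : ℝ) - (if 1 ≤ w i then 1 else 0))^2 := by
    have hZa : ((a:ℤ)) = ∑ i, (if 1 ≤ w i then (1:ℤ) else 0) := by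
      rw [Finset.sum_boole]
    have hZ : |T - (a:ℤ)| ≤ ∑ i, (w i - (if 1 ≤ w i then 1 else 0))^2 := by
      have h1 : T - (a:ℤ) = ∑ i, (w i - (if 1 ≤ w i then 1 else 0)) := by
        rw [sum_sub_distrib, ← hZa, hT_def]
      rw [h1]
      exact le_trans (Finset.abs_sum_le_sum_abs _ _) (sum_le_sum fun i _ => habs_int _)
    have hc1 : ((T:ℝ) - a) = ((T - (a:ℤ) : ℤ) : ℝ) := by push_cast; ring
    rw [hc1, ← Int.cast_abs]
    have hc2 : ((∑ i, (w i - (if 1 ≤ w i then 1 else 0))^2 : ℤ) : ℝ)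
        = ∑ i, ((w i : ℝ) - (if 1 ≤ w i then 1 else 0))^2 := by
      push_cast [apply_ite (Int.cast : ℤ → ℝ)]
      norm_num
    rw [← hc2]
    exact_mod_cast hZ
  -- sum lower bound
  have hsum_lb : (∑ i, (x i)^2) + (∑ i ∈ A, (1 - 2*x i)) + |(T:ℝ) - a|
      ≤ ∑ i, (x i - (w i : ℝ))^2 := by
    have hs := sum_le_sum (fun i (_ : i ∈ (univ : Finset (Fin n))) => hper i)
    rw [sum_add_distrib, sum_add_distrib] at hs
    have hA' : ∑ i : Fin n, (if 1 ≤ w i then (1 - 2*x i) else 0) = ∑ i ∈ A, (1 - 2*x i) :=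
      (sum_filter _ _).symm
    rw [hA'] at hs
    linarith [hC2]
  -- C3
  have hC3 : (X - m)^2 ≤ (X - (T:ℝ))^2 := by
    rcases le_or_gt T 0 with h | h
    · have hm0 : m = 0 := by omega
      have hT : (T:ℝ) ≤ 0 := by exact_mod_cast h
      rw [hm0]
      push_cast
      nlinarith
    · rcases le_or_gt T (n:ℤ) with h2 | h2
      · have hmT : (m:ℤ) = T := by omega
        have hmT' : (m:ℝ) = (T:ℝ) := by exact_mod_cast hmT
        rw [hmT']
      · have hmn' : m = n := by omega
        have hT : (n:ℝ) ≤ (T:ℝ) := by exact_mod_cast h2.le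
        rw [hmn']
        nlinarith
  -- C4
  have hC4 : |(m:ℝ) - a| ≤ |(T:ℝ) - a| := by
    have hZ : |(m:ℤ) - a| ≤ |T - (a:ℤ)| := by
      rw [Int.abs_eq_natAbs, Int.abs_eq_natAbs]
      have : ((m:ℤ) - a).natAbs ≤ (T - (a:ℤ)).natAbs := by omega
      exact_mod_cast this
    have hc1 : ((m:ℝ) - a) = (((m:ℤ) - a : ℤ) : ℝ) := by push_cast; ring
    have hc2 : ((T:ℝ) - a) = ((T - (a:ℤ) : ℤ) : ℝ) := by push_cast; ring
    rw [hc1, hc2, ← Int.cast_abs, ← Int.cast_abs]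
    exact_mod_cast hZ
  -- rearrange + tailshift
  have hf1 : ∀ i, (1 - 2*x i) ≤ 1 := fun i => by nlinarith [hx0 i]
  have hf2 : ∀ i, -1 ≤ 1 - 2*x i := fun i => by nlinarith [hx1 i]
  have hanti : ∀ i j : Fin n, i ≤ j → 1 - 2*x j ≤ 1 - 2*x i := fun i j h => by
    nlinarith [hmono i j h]
  have hR : ∑ i ∈ filter (fun i : Fin n => n - m ≤ (i:ℕ)) univ, (1 - 2*x i)
      ≤ ∑ i ∈ A, (1 - 2*x i) + |(m:ℝ) - a| := by
    have t1 := tailshift n m a hmn han (fun i => 1 - 2*x i) hf1 hf2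
    have t2 := rearrange n (fun i => 1 - 2*x i) hanti A
    rw [← ha_def] at t2
    linarith
  rw [hcand_sum, hcand_sq, hz_sum]
  linarith

theorem triangular_cv_algorithm_candidates {V : Type*}
    [NormedAddCommGroup V] [InnerProductSpace ℝ V]
    {n : ℕ} (hn : 1 ≤ n) (d : ℝ) (hd : 0 < d) (b : Fin n → V)
    (hnorm : ∀ i, ‖b i‖ = d)
    (hinner : ∀ i j, i ≠ j → (inner ℝ (b i) (b j) : ℝ) = d ^ 2 / 2)
    (xbar : Fin n → ℝ) (hx : ∀ i, 0 ≤ xbar i ∧ xbar i < 1)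
    (σ : Equiv.Perm (Fin n))
    (hσ : ∀ i j : Fin n, i ≤ j → xbar (σ i) ≤ xbar (σ j))
    (y : Fin (n + 1) → Fin n → ℤ)
    (hy : ∀ (k : Fin (n + 1)) (t : Fin n),
      y k t = if ((σ.symm t : Fin n) : ℕ) < (k : ℕ) then 0 else 1) :
    ∃ k : Fin (n + 1), ∀ z : Fin n → ℤ,
      ‖∑ i, (xbar i - (y k i : ℝ)) • b i‖ ≤ ‖∑ i, (xbar i - (z i : ℝ)) • b i‖ := by
  obtain ⟨k₀, -, hk₀⟩ := Finset.exists_min_image (Finset.univ : Finset (Fin (n+1)))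
    (fun k => ‖∑ i, (xbar i - (y k i : ℝ)) • b i‖) ⟨0, Finset.mem_univ 0⟩
  refine ⟨k₀, fun z => ?_⟩
  suffices h : ∃ k : Fin (n+1), ‖∑ i, (xbar i - (y k i : ℝ)) • b i‖
      ≤ ‖∑ i, (xbar i - (z i : ℝ)) • b i‖ by
    obtain ⟨k, hk⟩ := h
    exact le_trans (hk₀ k (Finset.mem_univ k)) hk
  obtain ⟨k, hk, hle⟩ := core n (fun i => xbar (σ i)) (fun i => (hx (σ i)).1)
    (fun i => (hx (σ i)).2) hσ (fun i => z (σ i))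
  refine ⟨⟨k, by omega⟩, ?_⟩
  rw [← pow_le_pow_iff_left₀ (norm_nonneg _) (norm_nonneg _) (two_ne_zero),
    normsq b hnorm hinner, normsq b hnorm hinner]
  apply mul_le_mul_of_nonneg_left _ (by positivity)
  -- reindex all four sums through σ
  have e1 : ∑ t, (xbar t - (y ⟨k, by omega⟩ t : ℝ))
      = ∑ i, ((fun i => xbar (σ i)) i - (if (i:ℕ) < k then 0 else 1)) := by
    rw [← Equiv.sum_comp σ (fun t => xbar t - (y ⟨k, by omega⟩ t : ℝ))]
    apply Finset.sum_congr rfl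
    intro i _
    rw [hy]
    simp only [Equiv.symm_apply_apply]
    push_cast [apply_ite (Int.cast : ℤ → ℝ)]
    norm_num
  have e2 : ∑ t, (xbar t - (y ⟨k, by omega⟩ t : ℝ))^2
      = ∑ i, ((fun i => xbar (σ i)) i - (if (i:ℕ) < k then 0 else 1))^2 := by
    rw [← Equiv.sum_comp σ (fun t => (xbar t - (y ⟨k, by omega⟩ t : ℝ))^2)]
    apply Finset.sum_congr rfl
    intro i _
    rw [hy]
    simp only [Equiv.symm_apply_apply]
    push_cast [apply_ite (Int.cast : ℤ → ℝ)]
    norm_num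
  have e3 : ∑ t, (xbar t - (z t : ℝ))
      = ∑ i, ((fun i => xbar (σ i)) i - ((fun i => z (σ i)) i : ℝ)) :=
    (Equiv.sum_comp σ (fun t => xbar t - (z t : ℝ))).symm
  have e4 : ∑ t, (xbar t - (z t : ℝ))^2
      = ∑ i, ((fun i => xbar (σ i)) i - ((fun i => z (σ i)) i : ℝ))^2 :=
    (Equiv.sum_comp σ (fun t => (xbar t - (z t : ℝ))^2)).symm
  rw [e1, e2, e3, e4]
  exact hle
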